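/- Let X = ℤ⁴ (type F₄) and τ ℤ-linear with τ(ω₄)=ω₁, τ(ω₁)=2ω₄, τ(ω₃)=ω₂, τ(ω₂)=2ω₃, and let r = 2s+1 ≥ 1 be odd. Every λ = aω₁+bω₂+cω₃+dω₄ with 0 ≤ a,b < 2^s and 0 ≤ c,d < 2^{s+1} has a unique expansion λ = Σ_{i=0}^{r-1} τ^i(λ_i) with each λ_i ∈ {0, ω₃, ω₄, ω₃+ω₄}. -/

import Mathlib

open Finset

private lemma ex_bits : ∀ (m : ℕ) (n : ℤ), 0 ≤ n → n < 2 ^ m →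
    ∃ b : ℕ → ℤ, (∀ k, b k = 0 ∨ b k = 1) ∧ n = ∑ k ∈ range m, 2 ^ k * b k := by
  intro m
  induction m with
  | zero =>
    intro n h0 h1
    exact ⟨fun _ => 0, fun _ => Or.inl rfl, by simp; omega⟩
  | succ m ih =>
    intro n h0 h1
    have hp : (2:ℤ) ^ (m+1) = 2 * 2 ^ m := by ring
    obtain ⟨b, hb, hs⟩ := ih (n / 2) (by positivity) (by omega)
    refine ⟨fun k => if k = 0 then n % 2 else b (k - 1), fun k => ?_, ?_⟩
    · by_cases h : k = 0 <;> simp [h]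
      · omega
      · exact hb _
    · rw [Finset.sum_range_succ']
      norm_num
      have hc : ∀ k ∈ range m, (2:ℤ)^(k+1) * b k = 2 * (2^k * b k) := by
        intro k _; ring
      rw [Finset.sum_congr rfl hc, ← Finset.mul_sum, ← hs]
      omega

private lemma uniq_bits : ∀ (m : ℕ) (b c : ℕ → ℤ), (∀ k, b k = 0 ∨ b k = 1) →
    (∀ k, c k = 0 ∨ c k = 1) →
    (∑ k ∈ range m, 2 ^ k * b k) = ∑ k ∈ range m, 2 ^ k * c k →
    ∀ k < m, b k = c k := by
  intro m
  induction m with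
  | zero => intro b c _ _ _ k hk; omega
  | succ m ih =>
    intro b c hb hc hs k hk
    rw [Finset.sum_range_succ', Finset.sum_range_succ'] at hs
    simp only [pow_zero, one_mul] at hs
    have e1 : ∀ j ∈ range m, (2:ℤ)^(j+1) * b (j+1) = 2 * (2^j * b (j+1)) := by
      intro j _; ring
    have e2 : ∀ j ∈ range m, (2:ℤ)^(j+1) * c (j+1) = 2 * (2^j * c (j+1)) := by
      intro j _; ring
    rw [Finset.sum_congr rfl e1, Finset.sum_congr rfl e2, ← Finset.mul_sum, ← Finset.mul_sum] at hs
    have h0 : b 0 = c 0 := by rcases hb 0 with h|h <;> rcases hc 0 with h'|h' <;> omega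
    have hrest : (∑ j ∈ range m, 2^j * b (j+1)) = ∑ j ∈ range m, 2^j * c (j+1) := by omega
    rcases Nat.eq_zero_or_pos k with h|h
    · subst h; exact h0
    · obtain ⟨j, rfl⟩ : ∃ j, k = j + 1 := ⟨k-1, by omega⟩
      exact ih _ _ (fun j => hb _) (fun j => hc _) hrest j (by omega)

private lemma sum_range_two_mul' {M : Type*} [AddCommMonoid M] (s : ℕ) (h : ℕ → M) :
    ∑ i ∈ range (2*s), h i = ∑ k ∈ range s, (h (2*k) + h (2*k+1)) := by
  induction s with
  | zero => simp
  | succ s ih =>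
    rw [show 2*(s+1) = (2*s+1)+1 from by ring, sum_range_succ, sum_range_succ, ih,
      sum_range_succ]
    abel

private lemma tau_apply' (τ : Module.End ℤ (ℤ × ℤ × ℤ × ℤ))
    (h4 : τ (0, 0, 0, 1) = (1, 0, 0, 0)) (h1 : τ (1, 0, 0, 0) = (0, 0, 0, 2))
    (h3 : τ (0, 0, 1, 0) = (0, 1, 0, 0)) (h2 : τ (0, 1, 0, 0) = (0, 0, 2, 0))
    (v : ℤ × ℤ × ℤ × ℤ) : τ v = (v.2.2.2, v.2.2.1, 2 * v.2.1, 2 * v.1) := by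
  obtain ⟨a, b, c, d⟩ := v
  have hv : (a, b, c, d) = a • ((1,0,0,0) : ℤ × ℤ × ℤ × ℤ) + b • (0,1,0,0)
      + c • (0,0,1,0) + d • (0,0,0,1) := by
    simp [Prod.ext_iff]
  rw [hv, map_add, map_add, map_add, map_smul, map_smul, map_smul, map_smul,
    h1, h2, h3, h4]
  simp [Prod.ext_iff, mul_comm]

private lemma tau_even (τ : Module.End ℤ (ℤ × ℤ × ℤ × ℤ))
    (ht : ∀ v : ℤ × ℤ × ℤ × ℤ, τ v = (v.2.2.2, v.2.2.1, 2 * v.2.1, 2 * v.1)) :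
    ∀ (k : ℕ) (v : ℤ × ℤ × ℤ × ℤ), (τ ^ (2*k)) v = (2^k : ℤ) • v := by
  have h2 : ∀ v : ℤ × ℤ × ℤ × ℤ, τ (τ v) = (2:ℤ) • v := by
    intro v; rw [ht, ht]; simp [Prod.ext_iff, Prod.smul_def, smul_eq_mul]
  intro k
  induction k with
  | zero => intro v; simp
  | succ k ih =>
    intro v
    rw [show 2*(k+1) = (2*k)+1+1 from by ring, pow_succ, pow_succ,
      Module.End.mul_apply, Module.End.mul_apply]
    rw [show (τ ^ (2*k)) (τ (τ v)) = (τ ^ (2*k)) ((2:ℤ) • v) from by rw [h2],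
      map_smul, ih, smul_smul]
    norm_num; ring_nf

private lemma tau_odd (τ : Module.End ℤ (ℤ × ℤ × ℤ × ℤ))
    (ht : ∀ v : ℤ × ℤ × ℤ × ℤ, τ v = (v.2.2.2, v.2.2.1, 2 * v.2.1, 2 * v.1)) :
    ∀ (k : ℕ) (v : ℤ × ℤ × ℤ × ℤ), (τ ^ (2*k+1)) v = (2^k : ℤ) • τ v := by
  intro k v
  rw [pow_succ, Module.End.mul_apply, tau_even τ ht k (τ v)]

private lemma sum_range_two_mul'' {M : Type*} [AddCommMonoid M] (s : ℕ) (h : ℕ → M) :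
    ∑ i ∈ range (2*s), h i = ∑ k ∈ range s, (h (2*k) + h (2*k+1)) := by
  induction s with
  | zero => simp
  | succ s ih =>
    rw [show 2*(s+1) = (2*s+1)+1 from by ring, sum_range_succ, sum_range_succ, ih,
      sum_range_succ]
    abel

private lemma sum_formula (τ : Module.End ℤ (ℤ × ℤ × ℤ × ℤ))
    (ht : ∀ v : ℤ × ℤ × ℤ × ℤ, τ v = (v.2.2.2, v.2.2.1, 2 * v.2.1, 2 * v.1))
    (s : ℕ) (g : ℕ → ℤ × ℤ × ℤ × ℤ) (hg : ∀ i, (g i).1 = 0 ∧ (g i).2.1 = 0) :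
    ∑ i ∈ range (2*s+1), (τ ^ i) (g i) =
      (∑ k ∈ range s, 2^k * (g (2*k+1)).2.2.2,
       ∑ k ∈ range s, 2^k * (g (2*k+1)).2.2.1,
       ∑ k ∈ range (s+1), 2^k * (g (2*k)).2.2.1,
       ∑ k ∈ range (s+1), 2^k * (g (2*k)).2.2.2) := by
  have term : ∀ k, (τ ^ (2*k)) (g (2*k)) + (τ ^ (2*k+1)) (g (2*k+1)) =
      ((2^k : ℤ) * (g (2*k+1)).2.2.2, 2^k * (g (2*k+1)).2.2.1,
       2^k * (g (2*k)).2.2.1, 2^k * (g (2*k)).2.2.2) := by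
    intro k
    rw [tau_even τ ht, tau_odd τ ht, ht]
    obtain ⟨e1, e2⟩ := hg (2*k)
    obtain ⟨o1, o2⟩ := hg (2*k+1)
    simp [Prod.ext_iff, Prod.smul_def, smul_eq_mul, e1, e2, o1, o2]
  rw [sum_range_succ, sum_range_two_mul'' s (fun i => (τ ^ i) (g i))]

  rw [Finset.sum_congr rfl (fun k _ => term k), tau_even τ ht]
  obtain ⟨e1, e2⟩ := hg (2*s)
  simp [Prod.ext_iff, Prod.smul_def, smul_eq_mul, e1, e2, Prod.fst_sum, Prod.snd_sum,
    sum_range_succ]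

private lemma comp_of_mem (v : ℤ × ℤ × ℤ × ℤ)
    (h : v = 0 ∨ v = (0, 0, 1, 0) ∨ v = (0, 0, 0, 1) ∨ v = (0, 0, 1, 1)) :
    v.1 = 0 ∧ v.2.1 = 0 ∧ (v.2.2.1 = 0 ∨ v.2.2.1 = 1) ∧ (v.2.2.2 = 0 ∨ v.2.2.2 = 1) := by
  rcases h with rfl | rfl | rfl | rfl <;> simp [Prod.ext_iff]

private lemma mem_of_comp (v : ℤ × ℤ × ℤ × ℤ) (h1 : v.1 = 0) (h2 : v.2.1 = 0)
    (h3 : v.2.2.1 = 0 ∨ v.2.2.1 = 1) (h4 : v.2.2.2 = 0 ∨ v.2.2.2 = 1) :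
    v = 0 ∨ v = (0, 0, 1, 0) ∨ v = (0, 0, 0, 1) ∨ v = (0, 0, 1, 1) := by
  obtain ⟨p, q, x, y⟩ := v
  simp only at h1 h2 h3 h4
  subst h1; subst h2
  rcases h3 with rfl | rfl <;> rcases h4 with rfl | rfl <;> simp [Prod.ext_iff]

/-- Type F₄, p = 2: τ-adic expansion. Every τ^r-restricted weight (r = 2s+1 odd) has a
unique expansion λ = Σ_{i=0}^{r-1} τ^i(λ_i) with each λ_i ∈ {0, ω₃, ω₄, ω₃+ω₄}. -/
theorem F4_tau_adic_expansion (τ : Module.End ℤ (ℤ × ℤ × ℤ × ℤ))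
    (h4 : τ (0, 0, 0, 1) = (1, 0, 0, 0)) (h1 : τ (1, 0, 0, 0) = (0, 0, 0, 2))
    (h3 : τ (0, 0, 1, 0) = (0, 1, 0, 0)) (h2 : τ (0, 1, 0, 0) = (0, 0, 2, 0))
    (s : ℕ) (r : ℕ) (hr : r = 2 * s + 1) (a b c d : ℤ)
    (ha0 : 0 ≤ a) (ha : a < 2 ^ s) (hb0 : 0 ≤ b) (hb : b < 2 ^ s)
    (hc0 : 0 ≤ c) (hc : c < 2 ^ (s + 1)) (hd0 : 0 ≤ d) (hd : d < 2 ^ (s + 1)) :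
    ∃! f : Fin r → ℤ × ℤ × ℤ × ℤ,
      (∀ i, f i = 0 ∨ f i = (0, 0, 1, 0) ∨ f i = (0, 0, 0, 1) ∨ f i = (0, 0, 1, 1)) ∧
      (a, b, c, d) = ∑ i : Fin r, (τ ^ (i : ℕ)) (f i) := by
  subst hr
  have ht : ∀ v : ℤ × ℤ × ℤ × ℤ, τ v = (v.2.2.2, v.2.2.1, 2 * v.2.1, 2 * v.1) :=
    tau_apply' τ h4 h1 h3 h2
  classical
  -- extension of a Fin-indexed family to ℕ
  set gext : (Fin (2*s+1) → ℤ × ℤ × ℤ × ℤ) → ℕ → ℤ × ℤ × ℤ × ℤ :=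
    fun f i => if h : i < 2*s+1 then f ⟨i, h⟩ else 0 with hgext
  have hfin : ∀ f : Fin (2*s+1) → ℤ × ℤ × ℤ × ℤ,
      ∑ i : Fin (2*s+1), (τ ^ (i : ℕ)) (f i) = ∑ i ∈ Finset.range (2*s+1), (τ ^ i) (gext f i) := by
    intro f
    rw [← Fin.sum_univ_eq_sum_range (fun i => (τ ^ i) (gext f i)) (2*s+1)]
    refine Finset.sum_congr rfl fun i _ => ?_
    congr 1
    simp [hgext, i.isLt]; intro h'; exact absurd i.isLt (by omega)
  have hcomp : ∀ (f : Fin (2*s+1) → ℤ × ℤ × ℤ × ℤ),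
      (∀ i, f i = 0 ∨ f i = (0,0,1,0) ∨ f i = (0,0,0,1) ∨ f i = (0,0,1,1)) →
      ∀ i : ℕ, (gext f i).1 = 0 ∧ (gext f i).2.1 = 0 ∧
        ((gext f i).2.2.1 = 0 ∨ (gext f i).2.2.1 = 1) ∧
        ((gext f i).2.2.2 = 0 ∨ (gext f i).2.2.2 = 1) := by
    intro f hf i
    by_cases h : i < 2*s+1
    · simp only [hgext, dif_pos h]
      exact comp_of_mem _ (hf ⟨i, h⟩)
    · simp [hgext, dif_neg h, show ¬ i ≤ 2*s by omega]
  -- the key characterization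
  have key : ∀ (f : Fin (2*s+1) → ℤ × ℤ × ℤ × ℤ),
      (∀ i, f i = 0 ∨ f i = (0,0,1,0) ∨ f i = (0,0,0,1) ∨ f i = (0,0,1,1)) →
      ((a, b, c, d) = ∑ i : Fin (2*s+1), (τ ^ (i : ℕ)) (f i) ↔
        (a = ∑ k ∈ Finset.range s, 2^k * (gext f (2*k+1)).2.2.2 ∧
         b = ∑ k ∈ Finset.range s, 2^k * (gext f (2*k+1)).2.2.1 ∧
         c = ∑ k ∈ Finset.range (s+1), 2^k * (gext f (2*k)).2.2.1 ∧
         d = ∑ k ∈ Finset.range (s+1), 2^k * (gext f (2*k)).2.2.2)) := by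
    intro f hf
    rw [hfin f, sum_formula τ ht s (gext f) (fun i => ⟨(hcomp f hf i).1, (hcomp f hf i).2.1⟩),
      Prod.ext_iff, Prod.ext_iff, Prod.ext_iff]
  -- existence: construct from binary expansions
  obtain ⟨A, hA, hAs⟩ := ex_bits s a ha0 ha
  obtain ⟨B, hB, hBs⟩ := ex_bits s b hb0 hb
  obtain ⟨C, hC, hCs⟩ := ex_bits (s+1) c hc0 hc
  obtain ⟨D, hD, hDs⟩ := ex_bits (s+1) d hd0 hd
  set F : Fin (2*s+1) → ℤ × ℤ × ℤ × ℤ :=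
    fun i => if (i : ℕ) % 2 = 0 then (0, 0, C ((i:ℕ)/2), D ((i:ℕ)/2))
      else (0, 0, B ((i:ℕ)/2), A ((i:ℕ)/2)) with hF
  have hFmem : ∀ i, F i = 0 ∨ F i = (0,0,1,0) ∨ F i = (0,0,0,1) ∨ F i = (0,0,1,1) := by
    intro i
    by_cases h : (i : ℕ) % 2 = 0 <;> simp only [hF, if_pos, h, if_neg, ite_true, ite_false] <;>
      [exact mem_of_comp _ rfl rfl (hC _) (hD _); skip]
    exact mem_of_comp _ rfl rfl (hB _) (hA _)
  have hFodd : ∀ k ∈ Finset.range s, (gext F (2*k+1)) = (0, 0, B k, A k) := by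
    intro k hk
    rw [Finset.mem_range] at hk
    have h1 : 2*k+1 < 2*s+1 := by omega
    simp only [hgext, dif_pos h1, hF]
    norm_num [Nat.mul_add_mod]
    constructor <;> · congr 1; omega
  have hFeven : ∀ k ∈ Finset.range (s+1), (gext F (2*k)) = (0, 0, C k, D k) := by
    intro k hk
    rw [Finset.mem_range] at hk
    have h1 : 2*k < 2*s+1 := by omega
    simp only [hgext, dif_pos h1, hF]
    norm_num [Nat.mul_mod_right]
  have hFsum : (a, b, c, d) = ∑ i : Fin (2*s+1), (τ ^ (i : ℕ)) (F i) := by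
    rw [key F hFmem]
    refine ⟨?_, ?_, ?_, ?_⟩
    · rw [Finset.sum_congr rfl fun k hk => by rw [hFodd k hk]]; exact hAs
    · rw [Finset.sum_congr rfl fun k hk => by rw [hFodd k hk]]; exact hBs
    · rw [Finset.sum_congr rfl fun k hk => by rw [hFeven k hk]]; exact hCs
    · rw [Finset.sum_congr rfl fun k hk => by rw [hFeven k hk]]; exact hDs
  refine ⟨F, ⟨hFmem, hFsum⟩, ?_⟩
  rintro f ⟨hfmem, hfsum⟩
  obtain ⟨ea, eb, ec, ed⟩ := (key f hfmem).1 hfsum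
  obtain ⟨ea', eb', ec', ed'⟩ := (key F hFmem).1 hFsum
  have hodd2 : ∀ k < s, (gext f (2*k+1)).2.2.2 = (gext F (2*k+1)).2.2.2 :=
    uniq_bits s _ _ (fun k => (hcomp f hfmem (2*k+1)).2.2.2)
      (fun k => (hcomp F hFmem (2*k+1)).2.2.2) (by rw [← ea, ← ea'])
  have hodd1 : ∀ k < s, (gext f (2*k+1)).2.2.1 = (gext F (2*k+1)).2.2.1 :=
    uniq_bits s _ _ (fun k => (hcomp f hfmem (2*k+1)).2.2.1)
      (fun k => (hcomp F hFmem (2*k+1)).2.2.1) (by rw [← eb, ← eb'])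
  have heven1 : ∀ k < s+1, (gext f (2*k)).2.2.1 = (gext F (2*k)).2.2.1 :=
    uniq_bits (s+1) _ _ (fun k => (hcomp f hfmem (2*k)).2.2.1)
      (fun k => (hcomp F hFmem (2*k)).2.2.1) (by rw [← ec, ← ec'])
  have heven2 : ∀ k < s+1, (gext f (2*k)).2.2.2 = (gext F (2*k)).2.2.2 :=
    uniq_bits (s+1) _ _ (fun k => (hcomp f hfmem (2*k)).2.2.2)
      (fun k => (hcomp F hFmem (2*k)).2.2.2) (by rw [← ed, ← ed'])
  funext i
  have hgi : ∀ (h : Fin (2*s+1) → ℤ × ℤ × ℤ × ℤ), gext h (i : ℕ) = h i := by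
    intro h
    simp [hgext, i.isLt]; intro h'; exact absurd i.isLt (by omega)
  have hgoal : gext f (i : ℕ) = gext F (i : ℕ) := by
    rcases Nat.even_or_odd (i : ℕ) with ⟨k, hk⟩ | ⟨k, hk⟩
    · have hks : k < s + 1 := by have := i.isLt; omega
      have hik : (i : ℕ) = 2 * k := by omega
      rw [hik]
      have q1 := heven1 k hks
      have q2 := heven2 k hks
      obtain ⟨d1, d2, _, _⟩ := hcomp f hfmem (2*k)
      obtain ⟨d1', d2', _, _⟩ := hcomp F hFmem (2*k)
      simp [Prod.ext_iff, d1, d1', d2, d2', q1, q2]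
    · have hks : k < s := by have := i.isLt; omega
      have hik : (i : ℕ) = 2 * k + 1 := by omega
      rw [hik]
      have q1 := hodd1 k hks
      have q2 := hodd2 k hks
      obtain ⟨d1, d2, _, _⟩ := hcomp f hfmem (2*k+1)
      obtain ⟨d1', d2', _, _⟩ := hcomp F hFmem (2*k+1)
      simp [Prod.ext_iff, d1, d1', d2, d2', q1, q2]
  rw [← hgi f, ← hgi F, hgoal]
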